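/- arXiv:2602.02013 — 4 statements merged into one kernel-verified Lean document; each statement's English description precedes it below -/
import Mathlib

section
/- (Disagreement scores of an escaping point) Let n ≥ 2, let x_1,…,x_n ∈ ℝ^m, fix an index k and a nonzero vector v ∈ ℝ^m, and for t > 0 consider the configuration obtained by replacing x_k with x_k + t·v, with Euclidean dissimilarity. Let Δ_i(t) denote the normalized disagreement scores of this configuration. Then lim_{t→∞} Δ_k(t) = 1/2, and for every i ≠ k, lim_{t→∞} Δ_i(t) = 1/(2(n−1)). -/
open Finset Filter

/-- Normalized disagreement scores of a configuration in `ℝ^m` with Euclidean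
dissimilarity. -/
noncomputable def snapScore (n m : ℕ) (x : Fin n → EuclideanSpace ℝ (Fin m))
    (i : Fin n) : ℝ :=
  (∑ j, ‖x i - x j‖) / (∑ p, ∑ q, ‖x p - x q‖)

lemma escape_norm {E : Type*} [NormedAddCommGroup E] [NormedSpace ℝ E]
    (v a : E) : Tendsto (fun t : ℝ => ‖a + t • v‖ / t) atTop (nhds ‖v‖) := by
  have h2 : Tendsto (fun t : ℝ => t⁻¹ • a + v) atTop (nhds ((0:E) + v)) := by
    have := (tendsto_inv_atTop_zero : Tendsto (fun t : ℝ => t⁻¹) atTop (nhds 0)).smul_const a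
    simpa using this.add_const v
  have h1 : Tendsto (fun t : ℝ => ‖t⁻¹ • a + v‖) atTop (nhds ‖v‖) := by
    simpa [Function.comp_def] using (continuous_norm.tendsto _).comp h2
  refine h1.congr' ?_
  filter_upwards [eventually_gt_atTop (0:ℝ)] with t ht
  have hts : a + t • v = t • (t⁻¹ • a + v) := by
    rw [smul_add, smul_smul, mul_inv_cancel₀ ht.ne', one_smul]
  rw [hts, norm_smul, Real.norm_eq_abs, abs_of_pos ht, mul_div_cancel_left₀ _ ht.ne']

/-- Disagreement scores of an escaping point: if `x_k` is moved to `x_k + t·v` with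
`v ≠ 0` and `t → ∞`, then its normalized disagreement score tends to `1/2`, while the
score of every other point tends to `1/(2(n−1))`. -/
theorem snap_escaping_point_scores (n m : ℕ) (hn : 2 ≤ n)
    (x : Fin n → EuclideanSpace ℝ (Fin m))
    (k : Fin n) (v : EuclideanSpace ℝ (Fin m)) (hv : v ≠ 0) :
    Tendsto (fun t : ℝ => snapScore n m (Function.update x k (x k + t • v)) k)
        atTop (nhds (1 / 2))
    ∧ ∀ i, i ≠ k →
      Tendsto (fun t : ℝ => snapScore n m (Function.update x k (x k + t • v)) i)
        atTop (nhds (1 / (2 * ((n : ℝ) - 1)))) := by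
  have hw : (0:ℝ) < ‖v‖ := norm_pos_iff.2 hv
  have hn1 : (0:ℝ) < (n:ℝ) - 1 := by
    have : (2:ℝ) ≤ (n:ℝ) := by exact_mod_cast hn
    linarith
  set w : ℝ := ‖v‖ with hwdef
  set y : ℝ → Fin n → EuclideanSpace ℝ (Fin m) :=
    fun t => Function.update x k (x k + t • v) with hy
  set c : Fin n → Fin n → ℝ := fun p q =>
    if p = k then (if q = k then 0 else w) else (if q = k then w else 0) with hc
  -- pairwise limits
  have key : ∀ p q : Fin n,
      Tendsto (fun t : ℝ => ‖y t p - y t q‖ / t) atTop (nhds (c p q)) := by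
    intro p q
    by_cases hp : p = k <;> by_cases hq : q = k
    · simp only [hp, hq, hc, hy, Function.update_self, sub_self, norm_zero, zero_div,
        if_pos]
      exact tendsto_const_nhds
    · simp only [hp, hc, hy, if_pos, if_neg hq, Function.update_self,
        Function.update_of_ne hq]
      have he : ∀ t : ℝ, x k + t • v - x q = (x k - x q) + t • v := by
        intro t; abel
      simp only [he]
      exact escape_norm v _
    · simp only [hq, hc, hy, if_neg hp, if_pos, Function.update_self,
        Function.update_of_ne hp]
      have he : ∀ t : ℝ, ‖x p - (x k + t • v)‖ = ‖(x k - x p) + t • v‖ := by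
        intro t; rw [norm_sub_rev]; congr 1; abel
      simp only [he]
      exact escape_norm v _
    · simp only [hc, hy, if_neg hp, if_neg hq, Function.update_of_ne hp,
        Function.update_of_ne hq]
      exact Tendsto.div_atTop tendsto_const_nhds tendsto_id
  -- row sums of c
  have hrow : ∀ p : Fin n, (∑ q, c p q) = if p = k then ((n:ℝ)-1) * w else w := by
    intro p
    by_cases hp : p = k
    · rw [hp, if_pos rfl]
      simp only [hc, if_pos]
      have hsplit : ∀ q : Fin n, (if q = k then (0:ℝ) else w)
          = w - (if q = k then w else 0) := by
        intro q; split <;> ring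
      rw [Finset.sum_congr rfl fun q _ => hsplit q, Finset.sum_sub_distrib,
        Finset.sum_const, Finset.sum_ite_eq' univ k fun _ => w]
      simp [Finset.card_univ, nsmul_eq_mul]
      ring
    · simp only [hc, if_neg hp]
      rw [Finset.sum_ite_eq' univ k fun _ => w]
      simp
  -- total sum of c
  have htot : (∑ p, ∑ q, c p q) = 2 * ((n:ℝ)-1) * w := by
    rw [Finset.sum_congr rfl fun p _ => hrow p]
    have hsplit : ∀ p : Fin n, (if p = k then ((n:ℝ)-1) * w else w)
        = w + (if p = k then ((n:ℝ)-1) * w - w else 0) := by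
      intro p; split <;> ring
    rw [Finset.sum_congr rfl fun p _ => hsplit p, Finset.sum_add_distrib,
      Finset.sum_const, Finset.sum_ite_eq' univ k]
    simp [Finset.card_univ, nsmul_eq_mul]
    ring
  have hL : 2 * ((n:ℝ)-1) * w ≠ 0 := by positivity
  -- numerator limits
  have hnum : ∀ i : Fin n,
      Tendsto (fun t : ℝ => (∑ j, ‖y t i - y t j‖) / t) atTop (nhds (∑ j, c i j)) := by
    intro i
    simp only [Finset.sum_div]
    exact tendsto_finset_sum _ fun j _ => key i j
  -- denominator limit
  have hden : Tendsto (fun t : ℝ => (∑ p, ∑ q, ‖y t p - y t q‖) / t) atTop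
      (nhds (2 * ((n:ℝ)-1) * w)) := by
    rw [← htot]
    have hrw : (fun t : ℝ => (∑ p, ∑ q, ‖y t p - y t q‖) / t)
        = fun t : ℝ => ∑ p, (∑ q, ‖y t p - y t q‖) / t := by
      funext t; rw [Finset.sum_div]
    rw [hrw]
    exact tendsto_finset_sum _ fun p _ => hnum p
  -- master limit
  have master : ∀ i : Fin n,
      Tendsto (fun t : ℝ => snapScore n m (y t) i) atTop
        (nhds ((∑ j, c i j) / (2 * ((n:ℝ)-1) * w))) := by
    intro i
    refine ((hnum i).div hden hL).congr' ?_
    filter_upwards [eventually_gt_atTop (0:ℝ)] with t ht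
    have htt : (t:ℝ) / t = 1 := div_self ht.ne'
    simp only [Pi.div_apply]
    rw [div_div_div_comm, htt, div_one]
    rfl
  constructor
  · have h := master k
    rw [hrow k, if_pos rfl] at h
    have : ((n:ℝ)-1) * w / (2 * ((n:ℝ)-1) * w) = 1 / 2 := by
      field_simp
    rwa [this] at h
  · intro i hi
    have h := master i
    rw [hrow i, if_neg hi] at h
    have : w / (2 * ((n:ℝ)-1) * w) = 1 / (2 * ((n:ℝ)-1)) := by
      rw [eq_div_iff (by positivity)]
      field_simp
    rwa [this] at h
end

section
/- (Suppression of Outlier Weights, limit form) Let n ≥ 2, let x_1,…,x_n ∈ ℝ^m, fix an index k and a nonzero vector v ∈ ℝ^m, and for t > 0 consider the configuration obtained by replacing x_k with x_k + t·v, with Euclidean dissimilarity. Let κ : ℝ → ℝ be continuous and positive, and let w_k(t) be the SNAP agreement weight of index k for this configuration. Then lim_{t→∞} w_k(t) = κ(1/2) / ( κ(1/2) + (n−1)·κ(1/(2(n−1))) ). -/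
open Finset Filter

/-- SNAP agreement weight of index `i` for dissimilarity `d` and kernel `κ`. -/
noncomputable def snapWeight (n : ℕ) (d : Fin n → Fin n → ℝ) (κ : ℝ → ℝ) (i : Fin n) : ℝ :=
  κ ((∑ j, d i j) / (∑ p, ∑ q, d p q)) / ∑ j, κ ((∑ l, d j l) / (∑ p, ∑ q, d p q))

lemma snap_aux_norm_tendsto {E : Type*} [NormedAddCommGroup E] [NormedSpace ℝ E] (a v : E) :
    Tendsto (fun t : ℝ => ‖a + t • v‖ / t) atTop (nhds ‖v‖) := by
  have h0 : Tendsto (fun t : ℝ => t⁻¹ • a) atTop (nhds (0 : E)) := by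
    have h1 : Tendsto (fun t : ℝ => t⁻¹) atTop (nhds (0 : ℝ)) := tendsto_inv_atTop_zero
    simpa using h1.smul_const a
  have h : Tendsto (fun t : ℝ => ‖t⁻¹ • a + v‖) atTop (nhds ‖v‖) := by
    simpa using (h0.add_const v).norm
  refine h.congr' ?_
  filter_upwards [eventually_gt_atTop 0] with t ht
  have : t⁻¹ • a + v = t⁻¹ • (a + t • v) := by
    rw [smul_add, smul_smul, inv_mul_cancel₀ ht.ne', one_smul]
  rw [this, norm_smul, Real.norm_eq_abs, abs_inv, abs_of_pos ht, inv_mul_eq_div]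

/-- Suppression of Outlier Weights (limit form): if `x_k` is moved to `x_k + t·v` with
`v ≠ 0` and `t → ∞`, then for a continuous positive kernel `κ` the SNAP agreement weight
of `k` tends to `κ(1/2) / (κ(1/2) + (n−1)·κ(1/(2(n−1))))`. -/
theorem snap_outlier_weight_limit (n m : ℕ) (hn : 2 ≤ n)
    (x : Fin n → EuclideanSpace ℝ (Fin m))
    (k : Fin n) (v : EuclideanSpace ℝ (Fin m)) (hv : v ≠ 0)
    (κ : ℝ → ℝ) (hκcont : Continuous κ) (hκpos : ∀ t, 0 < κ t) :
    Tendsto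
      (fun t : ℝ =>
        snapWeight n
          (fun p q => ‖Function.update x k (x k + t • v) p
                      - Function.update x k (x k + t • v) q‖) κ k)
      atTop
      (nhds (κ (1 / 2) / (κ (1 / 2) + ((n : ℝ) - 1) * κ (1 / (2 * ((n : ℝ) - 1)))))) := by
  have hv' : (0:ℝ) < ‖v‖ := norm_pos_iff.mpr hv
  have hn2 : (2:ℝ) ≤ (n:ℝ) := by exact_mod_cast hn
  have hn1 : (0:ℝ) < (n:ℝ) - 1 := by linarith
  set d : ℝ → Fin n → Fin n → ℝ := fun t p q =>
    ‖Function.update x k (x k + t • v) p - Function.update x k (x k + t • v) q‖ with hdd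
  set L : Fin n → Fin n → ℝ := fun p q =>
    if p = k then (if q = k then 0 else ‖v‖) else (if q = k then ‖v‖ else 0) with hL
  -- entrywise limits of d t p q / t
  have htd : ∀ p q, Tendsto (fun t => d t p q / t) atTop (nhds (L p q)) := by
    intro p q
    by_cases hp : p = k
    · by_cases hq : q = k
      · simp only [hdd, hL, hp, hq, Function.update_self, sub_self, norm_zero, zero_div,
          if_pos rfl]
        exact tendsto_const_nhds
      · have heq : ∀ t : ℝ, d t k q = ‖(x k - x q) + t • v‖ := by
          intro t
          simp only [hdd, Function.update_self, Function.update_of_ne hq]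
          congr 1
          abel
        simp only [hL, hp, if_pos rfl, if_neg hq]
        exact (snap_aux_norm_tendsto (x k - x q) v).congr (fun t => by rw [heq t])
    · by_cases hq : q = k
      · have heq : ∀ t : ℝ, d t p k = ‖(x p - x k) + t • (-v)‖ := by
          intro t
          simp only [hdd, Function.update_self, Function.update_of_ne hp]
          rw [smul_neg]
          congr 1
          abel
        simp only [hL, hq, if_neg hp, if_pos rfl]
        have h := snap_aux_norm_tendsto (x p - x k) (-v)
        rw [norm_neg] at h
        exact h.congr (fun t => by rw [heq t])
      · simp only [hL, if_neg hp, if_neg hq]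
        have heq : ∀ t : ℝ, d t p q = ‖x p - x q‖ := by
          intro t
          simp only [hdd, Function.update_of_ne hp, Function.update_of_ne hq]
        have h : Tendsto (fun t : ℝ => ‖x p - x q‖ / t) atTop (nhds 0) :=
          Tendsto.div_atTop tendsto_const_nhds tendsto_id
        exact h.congr (fun t => by rw [heq t])
  -- row sums
  have hrow : ∀ j, Tendsto (fun t => (∑ l, d t j l) / t) atTop (nhds (∑ l, L j l)) := by
    intro j
    have := tendsto_finset_sum Finset.univ (fun l (_ : l ∈ Finset.univ) => htd j l)
    simpa [← Finset.sum_div] using this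
  have htot : Tendsto (fun t => (∑ p, ∑ q, d t p q) / t) atTop
      (nhds (∑ p, ∑ q, L p q)) := by
    have := tendsto_finset_sum Finset.univ (fun p (_ : p ∈ Finset.univ) => hrow p)
    simpa [← Finset.sum_div] using this
  -- values of row sums
  have hsum_k : ∑ l, L k l = ((n:ℝ) - 1) * ‖v‖ := by
    have h1 : ∀ l : Fin n, L k l = ‖v‖ - (if l = k then ‖v‖ else 0) := by
      intro l; simp only [hL, if_pos rfl]; split <;> ring
    rw [Finset.sum_congr rfl (fun l _ => h1 l), Finset.sum_sub_distrib, Finset.sum_const,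
      Finset.sum_ite_eq' Finset.univ k (fun _ => ‖v‖)]
    simp only [Finset.card_univ, Fintype.card_fin, Finset.mem_univ, if_pos, nsmul_eq_mul]
    ring
  have hsum_j : ∀ j, j ≠ k → ∑ l, L j l = ‖v‖ := by
    intro j hj
    have h1 : ∀ l : Fin n, L j l = if l = k then ‖v‖ else 0 := by
      intro l; simp only [hL, if_neg hj]
    rw [Finset.sum_congr rfl (fun l _ => h1 l),
      Finset.sum_ite_eq' Finset.univ k (fun _ => ‖v‖)]
    simp
  have hsum_tot : ∑ p, ∑ q, L p q = 2 * ((n:ℝ) - 1) * ‖v‖ := by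
    rw [← Finset.add_sum_erase _ _ (Finset.mem_univ k), hsum_k]
    have h2 : ∀ p ∈ Finset.univ.erase k, ∑ q, L p q = ‖v‖ := by
      intro p hp
      exact hsum_j p (Finset.mem_erase.mp hp).1
    rw [Finset.sum_congr rfl h2, Finset.sum_const,
      Finset.card_erase_of_mem (Finset.mem_univ k), Finset.card_univ, Fintype.card_fin,
      nsmul_eq_mul, Nat.cast_sub (by omega : 1 ≤ n), Nat.cast_one]
    ring
  -- ratios
  have hDa0 : 2 * ((n:ℝ) - 1) * ‖v‖ ≠ 0 := by positivity
  set R : Fin n → ℝ := fun j => if j = k then 1/2 else 1 / (2 * ((n:ℝ) - 1)) with hR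
  have hratio : ∀ j, Tendsto (fun t => (∑ l, d t j l) / (∑ p, ∑ q, d t p q)) atTop
      (nhds (R j)) := by
    intro j
    have hRval : (∑ l, L j l) / (2 * ((n:ℝ) - 1) * ‖v‖) = R j := by
      by_cases hj : j = k
      · rw [hj, hsum_k, hR]
        simp only [if_pos rfl, if_true]
        field_simp
      · rw [hsum_j j hj, hR]
        simp only [if_neg hj]
        field_simp
    have htot' := htot
    rw [hsum_tot] at htot'
    have h := (hrow j).div htot' hDa0
    rw [hRval] at h
    refine h.congr' ?_
    filter_upwards [eventually_gt_atTop 0] with t ht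
    simp only [Pi.div_apply]
    rw [div_div_div_comm, div_self ht.ne', div_one]
  -- assemble
  have hnum : Tendsto (fun t => κ ((∑ l, d t k l) / (∑ p, ∑ q, d t p q))) atTop
      (nhds (κ (1/2))) := by
    have := (hκcont.tendsto (R k)).comp (hratio k)
    simpa [hR, Function.comp_def] using this
  have hden : Tendsto (fun t => ∑ j, κ ((∑ l, d t j l) / (∑ p, ∑ q, d t p q))) atTop
      (nhds (∑ j, κ (R j))) :=
    tendsto_finset_sum Finset.univ
      (fun j _ => (hκcont.tendsto (R j)).comp (hratio j))
  have hsumR : ∑ j, κ (R j) = κ (1/2) + ((n:ℝ) - 1) * κ (1 / (2 * ((n:ℝ) - 1))) := by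
    rw [← Finset.add_sum_erase _ _ (Finset.mem_univ k)]
    have h1 : R k = 1/2 := by simp [hR]
    have h2 : ∀ j ∈ Finset.univ.erase k, κ (R j) = κ (1 / (2 * ((n:ℝ) - 1))) := by
      intro j hj
      simp only [hR, if_neg (Finset.mem_erase.mp hj).1]
    rw [h1, Finset.sum_congr rfl h2, Finset.sum_const,
      Finset.card_erase_of_mem (Finset.mem_univ k), Finset.card_univ, Fintype.card_fin,
      nsmul_eq_mul, Nat.cast_sub (by omega : 1 ≤ n), Nat.cast_one]
  have hdenne : (κ (1/2) + ((n:ℝ) - 1) * κ (1 / (2 * ((n:ℝ) - 1)))) ≠ 0 := by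
    have h1 := hκpos (1/2)
    have h2 := hκpos (1 / (2 * ((n:ℝ) - 1)))
    positivity
  rw [hsumR] at hden
  simpa [snapWeight, hdd, Pi.div_def] using hnum.div hden hdenne
end

section
/- (Exponential Suppression of Outlier Weights, Laplacian kernel) In the SNAP setup, let I ⊆ {1,…,n} be a set of indices (inliers), let k ∉ I, let α > 0 with |I| ≥ α·n and α·n > 0, and let c₀ > 0. Assume the linear disagreement gap: for every i ∈ I, D_k − D_i ≥ c₀·n. Then for the kernel κ(x) = exp(−x/σ) with σ > 0, the SNAP agreement weight of k satisfies w_k ≤ (1/(α n)) · exp( −c₀ n / (σ D_a) ). -/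
open Finset

/-- Exponential Suppression of Outlier Weights, Laplacian kernel `κ(x) = exp(−x/σ)`:
under the linear disagreement gap `D_k − D_i ≥ c₀·n` for all inliers `i ∈ I`, the SNAP
weight of the outlier `k` satisfies `w_k ≤ (1/(αn))·exp(−c₀n/(σ·D_a))`. -/
theorem snap_exponential_suppression_laplacian (n : ℕ)
    (d : Fin n → Fin n → ℝ)
    (hd_nonneg : ∀ i j, 0 ≤ d i j)
    (hd_diag : ∀ i, d i i = 0)
    (hDa : 0 < ∑ p, ∑ q, d p q)
    (I : Finset (Fin n)) (k : Fin n) (hk : k ∉ I)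
    (α : ℝ) (hα : 0 < α) (hcard : α * n ≤ (I.card : ℝ)) (hαn : 0 < α * n)
    (c₀ : ℝ) (hc₀ : 0 < c₀)
    (hgap : ∀ i ∈ I, c₀ * n ≤ (∑ j, d k j) - (∑ j, d i j))
    (σ : ℝ) (hσ : 0 < σ) :
    snapWeight n d (fun t => Real.exp (-t / σ)) k
      ≤ (1 / (α * n)) * Real.exp (-(c₀ * n) / (σ * (∑ p, ∑ q, d p q))) := by
  classical
  set Da := ∑ p, ∑ q, d p q with hDadef
  set f : Fin n → ℝ := fun j => Real.exp (-((∑ l, d j l) / Da) / σ) with hf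
  have hfpos : ∀ j, 0 < f j := fun j => Real.exp_pos _
  set B := Real.exp (c₀ * n / (σ * Da)) with hB
  have hBpos : 0 < B := Real.exp_pos _
  -- per-element bound
  have hkey : ∀ i ∈ I, f k * B ≤ f i := by
    intro i hi
    have hgi := hgap i hi
    have hexp : -((∑ l, d k l) / Da) / σ + c₀ * n / (σ * Da) ≤ -((∑ l, d i l) / Da) / σ := by
      have hσDa : (0:ℝ) < σ * Da := mul_pos hσ hDa
      have h1 : c₀ * ↑n / (σ * Da) ≤ ((∑ l, d k l) - (∑ l, d i l)) / (σ * Da) := by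
        gcongr
      have heq : -((∑ l, d k l) / Da) / σ + ((∑ l, d k l) - (∑ l, d i l)) / (σ * Da)
          = -((∑ l, d i l) / Da) / σ := by
        field_simp
        ring
      linarith
    calc f k * B = Real.exp (-((∑ l, d k l) / Da) / σ + c₀ * n / (σ * Da)) := by
          rw [Real.exp_add]
      _ ≤ f i := Real.exp_le_exp.mpr hexp
  have hcard_pos : (0:ℝ) < I.card := lt_of_lt_of_le hαn hcard
  have hSlb : (I.card : ℝ) * (f k * B) ≤ ∑ j, f j := by
    calc (I.card : ℝ) * (f k * B) = ∑ _i ∈ I, f k * B := by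
          rw [Finset.sum_const, nsmul_eq_mul]
      _ ≤ ∑ i ∈ I, f i := Finset.sum_le_sum hkey
      _ ≤ ∑ j, f j := Finset.sum_le_sum_of_subset_of_nonneg (Finset.subset_univ I)
          (fun j _ _ => (hfpos j).le)
  have hSpos : 0 < ∑ j, f j :=
    lt_of_lt_of_le (by positivity) hSlb
  have hwk : snapWeight n d (fun t => Real.exp (-t / σ)) k = f k / ∑ j, f j := rfl
  rw [hwk]
  have h1 : f k / ∑ j, f j ≤ f k / ((I.card : ℝ) * (f k * B)) :=
    div_le_div_of_nonneg_left (hfpos k).le (by positivity) hSlb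
  have h2 : f k / ((I.card : ℝ) * (f k * B)) = 1 / ((I.card : ℝ) * B) := by
    field_simp
    exact mul_inv_cancel₀ (hfpos k).ne'
  have h3 : (1:ℝ) / ((I.card : ℝ) * B) ≤ 1 / (α * n * B) := by
    apply div_le_div_of_nonneg_left one_pos.le (by positivity)
    exact mul_le_mul_of_nonneg_right hcard hBpos.le
  have h4 : (1:ℝ) / (α * n * B) = (1 / (α * n)) * Real.exp (-(c₀ * n) / (σ * Da)) := by
    rw [neg_div, Real.exp_neg, hB]
    field_simp
  calc f k / ∑ j, f j ≤ f k / ((I.card : ℝ) * (f k * B)) := h1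
    _ = 1 / ((I.card : ℝ) * B) := h2
    _ ≤ 1 / (α * n * B) := h3
    _ = (1 / (α * n)) * Real.exp (-(c₀ * n) / (σ * Da)) := h4
end

section
/- (Exponential Suppression of Outlier Weights, Gaussian kernel) In the SNAP setup, let I ⊆ {1,…,n} be a set of indices (inliers), let k ∉ I, let α > 0 with |I| ≥ α·n and α·n > 0, and let c₀ > 0. Assume the linear disagreement gap: for every i ∈ I, D_k − D_i ≥ c₀·n. Then for the kernel κ(x) = exp(−x²/σ²) with σ > 0, the SNAP agreement weight of k satisfies w_k ≤ (1/(α n)) · exp( −(c₀ n / D_a)² / σ² ). -/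
open Finset

/-- Exponential Suppression of Outlier Weights, Gaussian kernel `κ(x) = exp(−x²/σ²)`:
under the linear disagreement gap `D_k − D_i ≥ c₀·n` for all inliers `i ∈ I`, the SNAP
weight of the outlier `k` satisfies `w_k ≤ (1/(αn))·exp(−(c₀n/D_a)²/σ²)`. -/
theorem snap_exponential_suppression_gaussian (n : ℕ)
    (d : Fin n → Fin n → ℝ)
    (hd_nonneg : ∀ i j, 0 ≤ d i j)
    (hd_diag : ∀ i, d i i = 0)
    (hDa : 0 < ∑ p, ∑ q, d p q)
    (I : Finset (Fin n)) (k : Fin n) (hk : k ∉ I)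
    (α : ℝ) (hα : 0 < α) (hcard : α * n ≤ (I.card : ℝ)) (hαn : 0 < α * n)
    (c₀ : ℝ) (hc₀ : 0 < c₀)
    (hgap : ∀ i ∈ I, c₀ * n ≤ (∑ j, d k j) - (∑ j, d i j))
    (σ : ℝ) (hσ : 0 < σ) :
    snapWeight n d (fun t => Real.exp (-t ^ 2 / σ ^ 2)) k
      ≤ (1 / (α * n)) * Real.exp (-((c₀ * n) / (∑ p, ∑ q, d p q)) ^ 2 / σ ^ 2) := by
  have hn : (0:ℝ) < n := by nlinarith
  set Da : ℝ := ∑ p, ∑ q, d p q with hDadef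
  set Δ : Fin n → ℝ := fun i => (∑ j, d i j) / Da with hΔ
  have hΔnonneg : ∀ i, 0 ≤ Δ i := fun i =>
    div_nonneg (Finset.sum_nonneg fun j _ => hd_nonneg i j) hDa.le
  set g : ℝ := c₀ * n / Da with hg
  have hgpos : 0 < g := div_pos (by positivity) hDa
  have hσ2 : (0:ℝ) < σ ^ 2 := by positivity
  set A : ℝ := Real.exp (-(Δ k) ^ 2 / σ ^ 2) with hA
  have hApos : 0 < A := Real.exp_pos _
  set E : ℝ := Real.exp (g ^ 2 / σ ^ 2) with hE
  have hEpos : 0 < E := Real.exp_pos _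
  -- each inlier term dominates
  have key : ∀ i ∈ I, E * A ≤ Real.exp (-(Δ i) ^ 2 / σ ^ 2) := by
    intro i hi
    have hgap' : g ≤ Δ k - Δ i := by
      have := hgap i hi
      rw [hg, hΔ]
      simp only
      rw [div_sub_div_same]
      exact (div_le_div_iff_of_pos_right hDa).mpr this
    have hi0 := hΔnonneg i
    rw [hE, hA, ← Real.exp_add]
    apply Real.exp_le_exp.mpr
    rw [← add_div, div_le_div_iff₀ hσ2 hσ2]
    have hkey2 : g ^ 2 + Δ i ^ 2 ≤ Δ k ^ 2 := by
      nlinarith [sq_nonneg (Δ k - Δ i - g)]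
    nlinarith [hkey2, hσ2]
  -- denominator lower bound
  have hden : α * n * (E * A) ≤ ∑ j, Real.exp (-(Δ j) ^ 2 / σ ^ 2) := by
    have h1 : (I.card : ℝ) * (E * A) ≤ ∑ i ∈ I, Real.exp (-(Δ i) ^ 2 / σ ^ 2) := by
      have := Finset.card_nsmul_le_sum I _ (E * A) key
      simpa [nsmul_eq_mul] using this
    have h2 : ∑ i ∈ I, Real.exp (-(Δ i) ^ 2 / σ ^ 2)
        ≤ ∑ j, Real.exp (-(Δ j) ^ 2 / σ ^ 2) :=
      Finset.sum_le_sum_of_subset_of_nonneg (Finset.subset_univ I)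
        (fun j _ _ => (Real.exp_pos _).le)
    have h3 : α * n * (E * A) ≤ (I.card : ℝ) * (E * A) :=
      mul_le_mul_of_nonneg_right hcard (by positivity)
    linarith
  have hden0 : 0 < α * n * (E * A) := by positivity
  have hw : snapWeight n d (fun t => Real.exp (-t ^ 2 / σ ^ 2)) k
      = A / ∑ j, Real.exp (-(Δ j) ^ 2 / σ ^ 2) := rfl
  rw [hw]
  have step : A / ∑ j, Real.exp (-(Δ j) ^ 2 / σ ^ 2) ≤ A / (α * n * (E * A)) :=
    div_le_div_of_nonneg_left hApos.le hden0 hden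
  refine step.trans_eq ?_
  have hrhs : Real.exp (-((c₀ * n) / Da) ^ 2 / σ ^ 2) = E⁻¹ := by
    rw [hE, ← Real.exp_neg, neg_div, hg]
  rw [hrhs]
  field_simp
end
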